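/- Let Υ_n be the graph whose vertices are the perfect matchings of the complete graph K_{2n}, with distinct matchings m, m' adjacent if and only if |m ∩ m'| = n − 2 (i.e., they differ by a single partner swap). Let a ∈ (0,1) and let X be a set of perfect matchings with |X| ≥ a·(2n−1)!!. Then for every h ∈ ℕ with h > h0 := √((n/2)·ln(1/a)), the set N_h(X) of perfect matchings at graph distance at most h from X in Υ_n satisfies |N_h(X)| ≥ (1 − exp(−2(h−h0)²/n))·(2n−1)!!. -/

import Mathlib

/-- `(2k-1)!! = 1 * 3 * 5 * ... * (2k-1)`, with `(-1)!! = 1`. -/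
def oddFactorial : ℕ → ℕ
  | 0 => 1
  | k + 1 => (2 * k + 1) * oddFactorial k

/-- A perfect matching of the complete graph on vertex set `{0, ..., 2n-1}`. -/
def IsPM (n : ℕ) (m : Finset (Finset ℕ)) : Prop :=
  (∀ e ∈ m, e.card = 2 ∧ e ⊆ Finset.range (2 * n)) ∧
  ∀ v ∈ Finset.range (2 * n), ∃! e, e ∈ m ∧ v ∈ e

/-- The perfect matching transposition graph `Υ_n`: two perfect matchings are
adjacent iff they differ by a single partner swap, i.e. share exactly `n - 2` edges. -/
def Upsilon (n : ℕ) : SimpleGraph (Finset (Finset ℕ)) where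
  Adj m m' := m ≠ m' ∧ IsPM n m ∧ IsPM n m' ∧ (m ∩ m').card = n - 2
  symm := by
    constructor
    rintro m m' ⟨h1, h2, h3, h4⟩
    exact ⟨h1.symm, h3, h2, by rwa [Finset.inter_comm]⟩
  loopless := by
    constructor
    rintro m ⟨h, -⟩
    exact h rfl

open Finset

namespace IsoPM

def isPM (S : Finset ℕ) (m : Finset (Finset ℕ)) : Prop :=
  (∀ e ∈ m, e.card = 2 ∧ e ⊆ S) ∧ ∀ v ∈ S, ∃! e, e ∈ m ∧ v ∈ e

def Gr (S : Finset ℕ) : SimpleGraph (Finset (Finset ℕ)) where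
  Adj m m' := m ≠ m' ∧ isPM S m ∧ isPM S m' ∧ (m ∩ m').card = S.card / 2 - 2
  symm := by
    constructor
    rintro m m' ⟨h1, h2, h3, h4⟩
    exact ⟨h1.symm, h3, h2, by rwa [Finset.inter_comm]⟩
  loopless := by
    constructor
    rintro m ⟨h, -⟩
    exact h rfl

noncomputable def PMs (S : Finset ℕ) : Finset (Finset (Finset ℕ)) :=
  @Finset.filter _ (isPM S) (Classical.decPred _) S.powerset.powerset

lemma mem_PMs {S : Finset ℕ} {m : Finset (Finset ℕ)} : m ∈ PMs S ↔ isPM S m := by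
  classical
  unfold PMs
  constructor
  · intro h
    exact (Finset.mem_filter.1 (by convert h)).2
  · intro h
    rw [Finset.mem_filter]
    refine ⟨?_, h⟩
    rw [Finset.mem_powerset]
    intro e he
    rw [Finset.mem_powerset]
    exact (h.1 e he).2

lemma edge_unique {S : Finset ℕ} {m : Finset (Finset ℕ)} (hm : isPM S m)
    {e e' : Finset ℕ} (he : e ∈ m) (he' : e' ∈ m) {v : ℕ} (hv : v ∈ e) (hv' : v ∈ e') :
    e = e' := by
  have hvS : v ∈ S := (hm.1 e he).2 hv
  obtain ⟨f, -, hu⟩ := hm.2 v hvS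
  rw [hu e ⟨he, hv⟩, hu e' ⟨he', hv'⟩]

lemma two_mul_card {S : Finset ℕ} {m : Finset (Finset ℕ)} (hm : isPM S m) :
    S.card = 2 * m.card := by
  classical
  have hS : S = m.biUnion id := by
    ext v
    simp only [Finset.mem_biUnion, id]
    constructor
    · intro hv
      obtain ⟨e, ⟨he, hve⟩, -⟩ := hm.2 v hv
      exact ⟨e, he, hve⟩
    · rintro ⟨e, he, hve⟩
      exact (hm.1 e he).2 hve
  rw [hS, Finset.card_biUnion]
  · rw [show (∑ u ∈ m, (id u).card) = ∑ u ∈ m, 2 from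
      Finset.sum_congr rfl (fun e he => (hm.1 e he).1), Finset.sum_const, smul_eq_mul, mul_comm]
  · intro e he e' he' hne
    rw [Function.onFun, Finset.disjoint_left]
    intro v hv hv'
    exact hne (edge_unique hm he he' hv hv')

lemma exists_partner {S : Finset ℕ} {m : Finset (Finset ℕ)} (hm : isPM S m)
    {v : ℕ} (hv : v ∈ S) : ∃ w, w ∈ S ∧ w ≠ v ∧ {v, w} ∈ m := by
  obtain ⟨e, ⟨he, hve⟩, -⟩ := hm.2 v hv
  obtain ⟨x, y, hxy, hexy⟩ := Finset.card_eq_two.1 (hm.1 e he).1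
  subst hexy
  rcases Finset.mem_insert.1 hve with h | h
  · subst h
    refine ⟨y, (hm.1 _ he).2 (by simp), hxy.symm, he⟩
  · rw [Finset.mem_singleton] at h
    subst h
    refine ⟨x, (hm.1 _ he).2 (by simp), hxy, by rwa [Finset.pair_comm]⟩

lemma pm_empty {m : Finset (Finset ℕ)} (hm : isPM ∅ m) : m = ∅ := by
  rw [Finset.eq_empty_iff_forall_notMem]
  intro e he
  obtain ⟨h2, hsub⟩ := hm.1 e he
  have : e = ∅ := Finset.subset_empty.1 hsub
  simp [this] at h2

lemma isPM_empty : isPM ∅ (∅ : Finset (Finset ℕ)) := by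
  constructor <;> simp

lemma PMs_empty : PMs (∅ : Finset ℕ) = {∅} := by
  ext m
  simp only [mem_PMs, Finset.mem_singleton]
  exact ⟨pm_empty, fun h => h ▸ isPM_empty⟩

lemma pm_card_ge {S : Finset ℕ} {m m' : Finset (Finset ℕ)} (hm : isPM S m)
    (hm' : isPM S m') (hne : m ≠ m') : 2 ≤ m.card := by
  by_contra hlt
  push_neg at hlt
  interval_cases h : m.card
  · have hm0 : m = ∅ := Finset.card_eq_zero.1 h
    have hS : S.card = 0 := by rw [two_mul_card hm, h]
    have : S = ∅ := Finset.card_eq_zero.1 hS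
    subst this
    exact hne (hm0.trans (pm_empty hm').symm)
  · obtain ⟨e, hme⟩ := Finset.card_eq_one.1 h
    have hS2 : S.card = 2 := by rw [two_mul_card hm, h]
    have heS : e = S := by
      refine Finset.eq_of_subset_of_card_le ((hm.1 e (by simp [hme])).2) ?_
      rw [hS2, (hm.1 e (by simp [hme])).1]
    have h1' : m'.card = 1 := by
      have := two_mul_card hm'
      omega
    obtain ⟨e', hme'⟩ := Finset.card_eq_one.1 h1'
    have heS' : e' = S := by
      refine Finset.eq_of_subset_of_card_le ((hm'.1 e' (by simp [hme'])).2) ?_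
      rw [hS2, (hm'.1 e' (by simp [hme'])).1]
    exact hne (by rw [hme, hme', heS, heS'])


lemma pair_ne {v w : ℕ} (hvw : v ≠ w) : ({v, w} : Finset ℕ).card = 2 := by
  rw [Finset.card_insert_of_notMem (by simp [hvw]), Finset.card_singleton]

lemma erase_pm {S : Finset ℕ} {m : Finset (Finset ℕ)} (hm : isPM S m)
    {v w : ℕ} (hvw : v ≠ w) (hmem : {v, w} ∈ m) :
    isPM (S \ {v, w}) (m.erase {v, w}) := by
  constructor
  · intro e he
    have he' : e ∈ m := Finset.mem_of_mem_erase he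
    have hne : e ≠ {v, w} := Finset.ne_of_mem_erase he
    refine ⟨(hm.1 e he').1, ?_⟩
    intro x hx
    rw [Finset.mem_sdiff]
    refine ⟨(hm.1 e he').2 hx, ?_⟩
    intro hxvw
    apply hne
    refine edge_unique hm he' hmem hx ?_
    exact hxvw
  · intro u hu
    rw [Finset.mem_sdiff] at hu
    obtain ⟨huS, huvw⟩ := hu
    obtain ⟨e, ⟨he, hue⟩, hun⟩ := hm.2 u huS
    have hne : e ≠ {v, w} := by
      intro h
      subst h
      exact huvw hue
    refine ⟨e, ⟨Finset.mem_erase.2 ⟨hne, he⟩, hue⟩, ?_⟩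
    intro f ⟨hf, huf⟩
    exact hun f ⟨Finset.mem_of_mem_erase hf, huf⟩

lemma pair_not_mem {S : Finset ℕ} {m₀ : Finset (Finset ℕ)} {v w : ℕ}
    (hm : isPM (S \ {v, w}) m₀) : ({v, w} : Finset ℕ) ∉ m₀ := by
  intro h
  have := (hm.1 _ h).2 (Finset.mem_insert_self v {w})
  rw [Finset.mem_sdiff] at this
  exact this.2 (by simp)

lemma insert_pm {S : Finset ℕ} {m₀ : Finset (Finset ℕ)} {v w : ℕ}
    (hv : v ∈ S) (hw : w ∈ S) (hvw : v ≠ w) (hm : isPM (S \ {v, w}) m₀) :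
    isPM S (insert {v, w} m₀) := by
  constructor
  · intro e he
    rcases Finset.mem_insert.1 he with h | h
    · subst h
      refine ⟨pair_ne hvw, ?_⟩
      intro x hx
      rcases Finset.mem_insert.1 hx with h | h
      · exact h ▸ hv
      · rw [Finset.mem_singleton] at h; exact h ▸ hw
    · obtain ⟨h2, hsub⟩ := hm.1 e h
      exact ⟨h2, hsub.trans (Finset.sdiff_subset)⟩
  · intro u hu
    by_cases huvw : u ∈ ({v, w} : Finset ℕ)
    · refine ⟨{v, w}, ⟨Finset.mem_insert_self _ _, huvw⟩, ?_⟩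
      rintro f ⟨hf, huf⟩
      rcases Finset.mem_insert.1 hf with h | h
      · exact h
      · exfalso
        have := (hm.1 f h).2 huf
        rw [Finset.mem_sdiff] at this
        exact this.2 huvw
    · obtain ⟨e, ⟨he, hue⟩, hun⟩ := hm.2 u (Finset.mem_sdiff.2 ⟨hu, huvw⟩)
      refine ⟨e, ⟨Finset.mem_insert_of_mem he, hue⟩, ?_⟩
      rintro f ⟨hf, huf⟩
      rcases Finset.mem_insert.1 hf with h | h
      · exact absurd (h ▸ huf) huvw
      · exact hun f ⟨h, huf⟩

/-- partition of the sum over `PMs S` into fibers according to the partner of `v`. -/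
lemma sum_fibers {M : Type*} [AddCommMonoid M] {S : Finset ℕ} {v : ℕ} (hv : v ∈ S)
    (F : Finset (Finset ℕ) → M) :
    ∑ m ∈ PMs S, F m
      = ∑ w ∈ S.erase v, ∑ m ∈ (PMs S).filter (fun m => {v, w} ∈ m), F m := by
  classical
  have hpart : PMs S = (S.erase v).biUnion
      (fun w => (PMs S).filter (fun m => {v, w} ∈ m)) := by
    ext m
    simp only [Finset.mem_biUnion, Finset.mem_filter]
    constructor
    · intro hm
      obtain ⟨w, hwS, hwv, hmem⟩ := exists_partner (mem_PMs.1 hm) hv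
      exact ⟨w, Finset.mem_erase.2 ⟨hwv, hwS⟩, hm, hmem⟩
    · rintro ⟨w, -, hm, -⟩
      exact hm
  have hdisj : (↑(S.erase v) : Set ℕ).PairwiseDisjoint
      (fun w => (PMs S).filter (fun m => {v, w} ∈ m)) := by
    intro w hw w' hw' hne
    simp only [Function.onFun]
    rw [Finset.disjoint_left]
    rintro m hm hm'
    rw [Finset.mem_filter] at hm hm'
    have := edge_unique (mem_PMs.1 hm.1) hm.2 hm'.2
      (Finset.mem_insert_self v _) (Finset.mem_insert_self v _)
    apply hne
    have hwmem : w ∈ ({v, w'} : Finset ℕ) := this ▸ (by simp : w ∈ ({v, w} : Finset ℕ))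
    rcases Finset.mem_insert.1 hwmem with h | h
    · exact absurd h (Finset.mem_erase.1 (Finset.mem_coe.1 hw)).1
    · rwa [Finset.mem_singleton] at h
  conv_lhs => rw [hpart]
  rw [Finset.sum_biUnion hdisj]

/-- transfer a fiber sum to a sum over matchings of the smaller vertex set -/
lemma sum_fiber_eq {M : Type*} [AddCommMonoid M] {S : Finset ℕ} {v w : ℕ}
    (hv : v ∈ S) (hw : w ∈ S) (hvw : v ≠ w) (F : Finset (Finset ℕ) → M) :
    ∑ m ∈ (PMs S).filter (fun m => {v, w} ∈ m), F m
      = ∑ m₀ ∈ PMs (S \ {v, w}), F (insert {v, w} m₀) := by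
  classical
  refine Finset.sum_nbij' (fun m => m.erase {v, w}) (fun m₀ => insert {v, w} m₀)
    ?_ ?_ ?_ ?_ ?_
  · intro m hm
    rw [Finset.mem_filter] at hm
    exact mem_PMs.2 (erase_pm (mem_PMs.1 hm.1) hvw hm.2)
  · intro m₀ hm₀
    rw [Finset.mem_filter]
    exact ⟨mem_PMs.2 (insert_pm hv hw hvw (mem_PMs.1 hm₀)), Finset.mem_insert_self _ _⟩
  · intro m hm
    rw [Finset.mem_filter] at hm
    exact Finset.insert_erase hm.2
  · intro m₀ hm₀
    exact Finset.erase_insert (pair_not_mem (mem_PMs.1 hm₀))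
  · intro m hm
    rw [Finset.mem_filter] at hm
    rw [Finset.insert_erase hm.2]

noncomputable section

def swapPM (w w' : ℕ) (m : Finset (Finset ℕ)) : Finset (Finset ℕ) :=
  m.image (fun e => e.image (fun x => Equiv.swap w w' x))

lemma image_swap_invol (w w' : ℕ) (e : Finset ℕ) :
    (e.image (fun x => Equiv.swap w w' x)).image (fun x => Equiv.swap w w' x) = e := by
  rw [Finset.image_image]
  ext x
  simp [Function.comp, Equiv.swap_apply_self]

lemma swapPM_invol (w w' : ℕ) (m : Finset (Finset ℕ)) : swapPM w w' (swapPM w w' m) = m := by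
  unfold swapPM
  rw [Finset.image_image]
  ext e
  simp only [Finset.mem_image, Function.comp_apply, image_swap_invol]
  exact ⟨fun ⟨f, hf, he⟩ => he ▸ hf, fun he => ⟨e, he, rfl⟩⟩

lemma mem_swapPM {w w' : ℕ} {m : Finset (Finset ℕ)} {e : Finset ℕ} :
    e ∈ swapPM w w' m ↔ e.image (fun x => Equiv.swap w w' x) ∈ m := by
  constructor
  · intro h
    obtain ⟨f, hf, rfl⟩ := Finset.mem_image.1 h
    rwa [image_swap_invol]
  · intro h
    have := Finset.mem_image_of_mem (fun e => e.image (fun x => Equiv.swap w w' x)) h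
    simpa only [image_swap_invol, swapPM] using this

lemma swapPM_pm {S : Finset ℕ} {m : Finset (Finset ℕ)} (hm : isPM S m)
    {w w' : ℕ} (hw : w ∈ S) (hw' : w' ∈ S) : isPM S (swapPM w w' m) := by
  have hmapS : ∀ x ∈ S, Equiv.swap w w' x ∈ S := by
    intro x hx
    rcases eq_or_ne x w with rfl | hxw
    · rwa [Equiv.swap_apply_left]
    rcases eq_or_ne x w' with rfl | hxw'
    · rwa [Equiv.swap_apply_right]
    · rwa [Equiv.swap_apply_of_ne_of_ne hxw hxw']
  constructor
  · intro e he
    obtain ⟨f, hf, rfl⟩ := Finset.mem_image.1 he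
    constructor
    · rw [Finset.card_image_of_injective _ (Equiv.injective _)]
      exact (hm.1 f hf).1
    · intro x hx
      obtain ⟨y, hy, rfl⟩ := Finset.mem_image.1 hx
      exact hmapS y ((hm.1 f hf).2 hy)
  · intro u hu
    have hu' : Equiv.swap w w' u ∈ S := hmapS u hu
    obtain ⟨e, ⟨he, hue⟩, hun⟩ := hm.2 (Equiv.swap w w' u) hu'
    have hmem : u ∈ e.image (fun x => Equiv.swap w w' x) := by
      rw [Finset.mem_image]
      exact ⟨Equiv.swap w w' u, hue, Equiv.swap_apply_self _ _ _⟩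
    refine ⟨e.image (fun x => Equiv.swap w w' x), ⟨Finset.mem_image_of_mem _ he, hmem⟩, ?_⟩
    rintro f ⟨hf, huf⟩
    rw [mem_swapPM] at hf
    have huf' : Equiv.swap w w' u ∈ f.image (fun x => Equiv.swap w w' x) :=
      Finset.mem_image_of_mem _ huf
    have := hun _ ⟨hf, huf'⟩
    calc f = (f.image (fun x => Equiv.swap w w' x)).image (fun x => Equiv.swap w w' x) :=
        (image_swap_invol _ _ _).symm
    _ = e.image (fun x => Equiv.swap w w' x) := by rw [this]

lemma image_swap_pair {v w w' : ℕ} (hvw : v ≠ w) (hvw' : v ≠ w') :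
    ({v, w} : Finset ℕ).image (fun x => Equiv.swap w w' x) = {v, w'} := by
  rw [Finset.image_insert, Finset.image_singleton, Equiv.swap_apply_left,
    Equiv.swap_apply_of_ne_of_ne hvw hvw']

lemma swapPM_fiber {m : Finset (Finset ℕ)} {v w w' : ℕ} (hvw : v ≠ w) (hvw' : v ≠ w')
    (hmem : {v, w} ∈ m) : {v, w'} ∈ swapPM w w' m := by
  rw [mem_swapPM, Finset.image_insert, Finset.image_singleton,
    Equiv.swap_apply_of_ne_of_ne hvw hvw', Equiv.swap_apply_right]
  exact hmem

/-- key adjacency: a matching and its swap are adjacent in `Gr S`. -/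
lemma swapPM_adj {S : Finset ℕ} {m : Finset (Finset ℕ)} (hm : isPM S m)
    {v w w' : ℕ} (hv : v ∈ S) (hw : w ∈ S) (hw' : w' ∈ S)
    (hvw : v ≠ w) (hvw' : v ≠ w') (hww' : w ≠ w') (hmem : {v, w} ∈ m) :
    (Gr S).Adj m (swapPM w w' m) := by
  classical
  -- the edge of w' in m
  obtain ⟨u, huS, huw', hew'⟩ := exists_partner hm hw'
  have hem : ({w', u} : Finset ℕ) ∈ m := hew'
  have huv : u ≠ v := by
    rintro rfl
    have heq := edge_unique (v := u) hm hem hmem (by simp) (by simp)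
    have : w ∈ ({w', u} : Finset ℕ) := by rw [heq]; simp
    rcases Finset.mem_insert.1 this with h | h
    · exact hww' h
    · rw [Finset.mem_singleton] at h; exact hvw h.symm
  have huw : u ≠ w := by
    rintro rfl
    have heq := edge_unique (v := u) hm hem hmem (by simp) (by simp)
    have : w' ∈ ({v, u} : Finset ℕ) := by rw [← heq]; simp
    rcases Finset.mem_insert.1 this with h | h
    · exact hvw' h.symm
    · rw [Finset.mem_singleton] at h; exact huw' h.symm
  have hpairne : ({v, w} : Finset ℕ) ≠ {w', u} := by
    intro h
    have : v ∈ ({w', u} : Finset ℕ) := by rw [← h]; simp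
    rcases Finset.mem_insert.1 this with h1 | h1
    · exact hvw' h1
    · rw [Finset.mem_singleton] at h1; exact huv h1.symm
  -- {v,w} not in swap
  have hnot1 : ({v, w} : Finset ℕ) ∉ swapPM w w' m := by
    rw [mem_swapPM, image_swap_pair hvw hvw']
    intro h
    have heq := edge_unique (v := v) hm h hmem (by simp) (by simp)
    have : w' ∈ ({v, w} : Finset ℕ) := by rw [← heq]; simp
    rcases Finset.mem_insert.1 this with h1 | h1
    · exact hvw' h1.symm
    · rw [Finset.mem_singleton] at h1; exact hww' h1.symm
  have hnot2 : ({w', u} : Finset ℕ) ∉ swapPM w w' m := by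
    rw [mem_swapPM]
    have : ({w', u} : Finset ℕ).image (fun x => Equiv.swap w w' x) = {w, u} := by
      rw [Finset.image_insert, Finset.image_singleton, Equiv.swap_apply_right,
        Equiv.swap_apply_of_ne_of_ne huw huw']
    rw [this]
    intro h
    have heq := edge_unique (v := w) hm h hmem (by simp) (by simp)
    have : u ∈ ({v, w} : Finset ℕ) := by rw [← heq]; simp
    rcases Finset.mem_insert.1 this with h1 | h1
    · exact huv h1
    · rw [Finset.mem_singleton] at h1; exact huw h1
  -- other edges are fixed
  have hfix : ∀ e ∈ m, e ≠ {v, w} → e ≠ {w', u} →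
      e.image (fun x => Equiv.swap w w' x) = e := by
    intro e he hne1 hne2
    have hwe : w ∉ e := by
      intro hwe
      exact hne1 (edge_unique hm he hmem hwe (by simp))
    have hw'e : w' ∉ e := by
      intro hw'e
      exact hne2 (edge_unique hm he hem hw'e (by simp))
    rw [Finset.image_congr (g := id) ?_, Finset.image_id]
    intro x hx
    simp only [id]
    exact Equiv.swap_apply_of_ne_of_ne (by rintro rfl; exact hwe hx)
      (by rintro rfl; exact hw'e hx)
  have hinter : m ∩ swapPM w w' m = (m.erase {v, w}).erase {w', u} := by
    ext e
    simp only [Finset.mem_inter, Finset.mem_erase]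
    constructor
    · rintro ⟨hem', hes⟩
      refine ⟨?_, ?_, hem'⟩
      · rintro rfl; exact hnot2 hes
      · rintro rfl; exact hnot1 hes
    · rintro ⟨hne2, hne1, hem'⟩
      refine ⟨hem', ?_⟩
      rw [mem_swapPM]
      have := hfix e hem' hne1 hne2
      -- image is an involution, so e.image swap = e as well
      rwa [this]
  refine ⟨?_, hm, swapPM_pm hm hw hw', ?_⟩
  · intro h
    rw [← h] at hnot1
    exact hnot1 hmem
  · rw [hinter, Finset.card_erase_of_mem, Finset.card_erase_of_mem hmem]
    · have hcard := two_mul_card hm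
      have h2 : 2 ≤ m.card := by
        have hvm : v ∈ ({v, w} : Finset ℕ) := by simp
        have : ({v, w} : Finset ℕ) ≠ ({w', u} : Finset ℕ) := hpairne
        exact Finset.one_lt_card.2 ⟨_, hmem, _, hem, hpairne⟩
      omega
    · exact Finset.mem_erase.2 ⟨fun h => hpairne h.symm, hem⟩

lemma adj_insert {S : Finset ℕ} {v w : ℕ} (hv : v ∈ S) (hw : w ∈ S) (hvw : v ≠ w)
    {m₀ m₀' : Finset (Finset ℕ)} (hadj : (Gr (S \ {v, w})).Adj m₀ m₀') :
    (Gr S).Adj (insert {v, w} m₀) (insert {v, w} m₀') := by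
  classical
  obtain ⟨hne, hpm, hpm', hcard⟩ := hadj
  have hnm : ({v, w} : Finset ℕ) ∉ m₀ := pair_not_mem hpm
  have hnm' : ({v, w} : Finset ℕ) ∉ m₀' := pair_not_mem hpm'
  have hc2 : 2 ≤ m₀.card := pm_card_ge hpm hpm' hne
  have hS' : (S \ {v, w}).card = S.card - 2 := by
    rw [Finset.card_sdiff_of_subset]
    · rw [pair_ne hvw]
    · intro x hx
      rcases Finset.mem_insert.1 hx with h | h
      · exact h ▸ hv
      · rw [Finset.mem_singleton] at h; exact h ▸ hw
  have hSeven : (S \ {v, w}).card = 2 * m₀.card := two_mul_card hpm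
  have hScard : S.card = 2 * m₀.card + 2 := by
    have hsub : ({v, w} : Finset ℕ) ⊆ S := by
      intro x hx
      rcases Finset.mem_insert.1 hx with h | h
      · exact h ▸ hv
      · rw [Finset.mem_singleton] at h; exact h ▸ hw
    have := Finset.card_le_card hsub
    rw [pair_ne hvw] at this
    omega
  refine ⟨?_, insert_pm hv hw hvw hpm, insert_pm hv hw hvw hpm', ?_⟩
  · intro h
    apply hne
    have := congrArg (fun s => Finset.erase s {v, w}) h
    simpa [Finset.erase_insert hnm, Finset.erase_insert hnm'] using this
  · rw [← Finset.insert_inter_distrib, Finset.card_insert_of_notMem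
      (fun h => hnm (Finset.mem_inter.1 h).1), hcard, hS', hScard]
    omega

lemma pm_of_reachable {S : Finset ℕ} {x m : Finset (Finset ℕ)}
    (hr : (Gr S).Reachable x m) (hx : isPM S x) : isPM S m := by
  obtain ⟨p⟩ := hr
  induction p with
  | nil => exact hx
  | cons h p ih => exact ih h.2.2.1

lemma reach_insert {S : Finset ℕ} {v w : ℕ} (hv : v ∈ S) (hw : w ∈ S) (hvw : v ≠ w)
    {m₀ m₀' : Finset (Finset ℕ)} (hr : (Gr (S \ {v, w})).Reachable m₀ m₀') :
    (Gr S).Reachable (insert {v, w} m₀) (insert {v, w} m₀') := by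
  obtain ⟨p⟩ := hr
  induction p with
  | nil => exact SimpleGraph.Reachable.refl _
  | cons h p ih => exact (SimpleGraph.Adj.reachable (adj_insert hv hw hvw h)).trans ih

theorem pm_reachable : ∀ N : ℕ, ∀ S : Finset ℕ, S.card ≤ N →
    ∀ {m m' : Finset (Finset ℕ)}, isPM S m → isPM S m' → (Gr S).Reachable m m' := by
  intro N
  induction N with
  | zero =>
    intro S hS m m' hm hm'
    have : S = ∅ := Finset.card_eq_zero.1 (Nat.le_zero.1 hS)
    subst this
    rw [pm_empty hm, pm_empty hm']
  | succ N ih =>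
    intro S hS m m' hm hm'
    rcases Finset.eq_empty_or_nonempty S with rfl | ⟨v, hv⟩
    · rw [pm_empty hm, pm_empty hm']
    obtain ⟨w, hwS, hwv, hwm⟩ := exists_partner hm hv
    obtain ⟨w', hw'S, hw'v, hw'm⟩ := exists_partner hm' hv
    have hcard' : (S \ {v, w'}).card ≤ N := by
      have : (S \ {v, w'}).card < S.card := by
        apply Finset.card_lt_card
        constructor
        · exact Finset.sdiff_subset
        · intro hsub
          have := hsub hv
          rw [Finset.mem_sdiff] at this
          exact this.2 (by simp)
      omega
    -- reach within the fiber of w'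
    have fiber_reach : ∀ {a b : Finset (Finset ℕ)}, isPM S a → isPM S b →
        {v, w'} ∈ a → {v, w'} ∈ b → (Gr S).Reachable a b := by
      intro a b ha hb hae hbe
      have h1 := erase_pm ha hw'v.symm hae
      have h2 := erase_pm hb hw'v.symm hbe
      have := reach_insert hv hw'S hw'v.symm (ih _ hcard' h1 h2)
      rwa [Finset.insert_erase hae, Finset.insert_erase hbe] at this
    rcases eq_or_ne w w' with rfl | hww'
    · exact fiber_reach hm hm' hwm hw'm
    · have hadj := swapPM_adj hm hv hwS hw'S hwv.symm hw'v.symm hww' hwm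
      have hmem' : {v, w'} ∈ swapPM w w' m := swapPM_fiber hwv.symm hw'v.symm hwm
      exact hadj.reachable.trans
        (fiber_reach (swapPM_pm hm hwS hw'S) hm' hmem' hw'm)

lemma oddFactorial_pos (k : ℕ) : 0 < oddFactorial k := by
  induction k with
  | zero => simp [oddFactorial]
  | succ k ih =>
    show 0 < (2 * k + 1) * oddFactorial k
    exact Nat.mul_pos (by omega) ih

theorem card_PMs : ∀ k : ℕ, ∀ S : Finset ℕ, S.card = 2 * k →
    (PMs S).card = oddFactorial k := by
  intro k
  induction k with
  | zero =>
    intro S hS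
    have : S = ∅ := Finset.card_eq_zero.1 hS
    subst this
    rw [PMs_empty]
    simp [oddFactorial]
  | succ k ih =>
    intro S hS
    have hvne : S.Nonempty := Finset.card_pos.1 (by omega)
    obtain ⟨v, hv⟩ := hvne
    have hcount := sum_fibers hv (fun _ => (1 : ℕ))
    rw [Finset.sum_const, smul_eq_mul, mul_one] at hcount
    have hfib : ∀ w ∈ S.erase v,
        (∑ m ∈ (PMs S).filter (fun m => {v, w} ∈ m), (1 : ℕ)) = oddFactorial k := by
      intro w hw
      obtain ⟨hwv, hwS⟩ := Finset.mem_erase.1 hw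
      rw [sum_fiber_eq hv hwS (Ne.symm hwv) (fun _ => (1 : ℕ)), Finset.sum_const,
        smul_eq_mul, mul_one]
      apply ih
      rw [Finset.card_sdiff_of_subset]
      · rw [pair_ne (Ne.symm hwv), hS]; omega
      · intro x hx
        rcases Finset.mem_insert.1 hx with h | h
        · exact h ▸ hv
        · rw [Finset.mem_singleton] at h; exact h ▸ hwS
    rw [Finset.sum_congr rfl hfib, Finset.sum_const, smul_eq_mul] at hcount
    rw [hcount, Finset.card_erase_of_mem hv, hS]
    show (2 * (k + 1) - 1) * oddFactorial k = oddFactorial (k + 1)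
    have h21 : 2 * (k + 1) - 1 = 2 * k + 1 := by omega
    rw [h21]
    rfl

theorem Upsilon_eq (n : ℕ) : Upsilon n = Gr (Finset.range (2 * n)) := by
  ext m m'
  show (m ≠ m' ∧ IsPM n m ∧ IsPM n m' ∧ (m ∩ m').card = n - 2) ↔ _
  have h1 : IsPM n = isPM (Finset.range (2 * n)) := rfl
  have h2 : (Finset.range (2 * n)).card / 2 - 2 = n - 2 := by
    rw [Finset.card_range]; omega
  rw [h1]
  exact Iff.intro (fun ⟨a, b, c, d⟩ => ⟨a, b, c, by rw [h2]; exact d⟩)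
    (fun ⟨a, b, c, d⟩ => ⟨a, b, c, by rw [← h2]; exact d⟩)

lemma dist_succ {V : Type*} {G : SimpleGraph V} {x m m' : V}
    (hr : G.Reachable x m) (hadj : G.Adj m m') : G.dist x m' ≤ G.dist x m + 1 := by
  obtain ⟨p, hp⟩ := hr.exists_walk_length_eq_dist
  have := SimpleGraph.dist_le (p.concat hadj)
  rwa [SimpleGraph.Walk.length_concat, hp] at this

section Hoeffding

lemma hoeffding_core {t : ℝ} (ht0 : 0 ≤ t) (ht1 : t ≤ 1) (x : ℝ) :
    1 - t + t * Real.exp x ≤ Real.exp (t * x + x ^ 2 / 8) := by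
  rcases eq_or_lt_of_le ht0 with rfl | htpos
  · simpa using Real.one_le_exp (by positivity : (0:ℝ) ≤ x ^ 2 / 8)
  have hu : ∀ y : ℝ, 0 < 1 - t + t * Real.exp y := by
    intro y
    nlinarith [Real.exp_pos y]
  set u : ℝ → ℝ := fun y => 1 - t + t * Real.exp y with hu_def
  set φ : ℝ → ℝ := fun y => t * y + y ^ 2 / 8 - Real.log (u y) with hφ_def
  set ψ : ℝ → ℝ := fun y => t + y / 4 - t * Real.exp y / u y with hψ_def
  have hud : ∀ y : ℝ, HasDerivAt u (t * Real.exp y) y := by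
    intro y
    exact ((Real.hasDerivAt_exp y).const_mul t).const_add (1 - t)
  have hφd : ∀ y : ℝ, HasDerivAt φ (ψ y) y := by
    intro y
    have h1 : HasDerivAt (fun y : ℝ => t * y + y ^ 2 / 8) (t + y / 4) y := by
      have ha : HasDerivAt (fun y : ℝ => t * y) t y := by
        simpa using (hasDerivAt_id y).const_mul t
      have hb : HasDerivAt (fun y : ℝ => y ^ 2 / 8) (y / 4) y := by
        have := (hasDerivAt_pow 2 y).div_const 8
        refine this.congr_deriv ?_
        ring
      exact ha.add hb
    have h2 : HasDerivAt (fun y => Real.log (u y)) (t * Real.exp y / u y) y :=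
      (hud y).log (ne_of_gt (hu y))
    exact h1.sub h2
  have hψd : ∀ y : ℝ, HasDerivAt ψ
      (1 / 4 - (t * Real.exp y / u y - (t * Real.exp y / u y) ^ 2)) y := by
    intro y
    have hq : HasDerivAt (fun y => t * Real.exp y / u y)
        ((t * Real.exp y * u y - t * Real.exp y * (t * Real.exp y)) / u y ^ 2) y :=
      ((Real.hasDerivAt_exp y).const_mul t).div (hud y) (ne_of_gt (hu y))
    have h0 : u y ≠ 0 := ne_of_gt (hu y)
    have hval : (t * Real.exp y * u y - t * Real.exp y * (t * Real.exp y)) / u y ^ 2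
        = t * Real.exp y / u y - (t * Real.exp y / u y) ^ 2 := by
      field_simp [h0]
    rw [hval] at hq
    have hc : HasDerivAt (fun y : ℝ => t + y / 4) (1 / 4) y := by
      simpa using ((hasDerivAt_id y).div_const 4).const_add t
    exact hc.sub hq
  have hψmono : Monotone ψ := by
    apply monotone_of_deriv_nonneg
    · exact fun y => (hψd y).differentiableAt
    · intro y
      rw [(hψd y).deriv]
      nlinarith [sq_nonneg (t * Real.exp y / u y - 1 / 2)]
  have hu0 : u 0 = 1 := by simp [hu_def]
  have hψ0 : ψ 0 = 0 := by
    rw [hψ_def]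
    simp only [Real.exp_zero, mul_one, hu0]
    norm_num
  have hφ0 : φ 0 = 0 := by
    rw [hφ_def]
    simp only [hu0, Real.log_one]
    norm_num
  have hφdiff : Differentiable ℝ φ := fun y => (hφd y).differentiableAt
  have hφnonneg : 0 ≤ φ x := by
    rcases le_total 0 x with hx | hx
    · have hmono : MonotoneOn φ (Set.Ici 0) := by
        apply monotoneOn_of_deriv_nonneg (convex_Ici 0) hφdiff.continuous.continuousOn
          hφdiff.differentiableOn
        intro y hy
        rw [interior_Ici] at hy
        rw [(hφd y).deriv]
        have := hψmono (le_of_lt hy)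
        rwa [hψ0] at this
      have := hmono (Set.self_mem_Ici) (Set.mem_Ici.2 hx) hx
      rwa [hφ0] at this
    · have hanti : AntitoneOn φ (Set.Iic 0) := by
        apply antitoneOn_of_deriv_nonpos (convex_Iic 0) hφdiff.continuous.continuousOn
          hφdiff.differentiableOn
        intro y hy
        rw [interior_Iic] at hy
        rw [(hφd y).deriv]
        have := hψmono (le_of_lt hy)
        rwa [hψ0] at this
      have := hanti (Set.mem_Iic.2 hx) (Set.self_mem_Iic) hx
      rwa [hφ0] at this
  have hlog : Real.log (u x) ≤ t * x + x ^ 2 / 8 := by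
    rw [hφ_def] at hφnonneg
    simp only at hφnonneg
    linarith
  calc 1 - t + t * Real.exp x = u x := rfl
  _ = Real.exp (Real.log (u x)) := (Real.exp_log (hu x)).symm
  _ ≤ Real.exp (t * x + x ^ 2 / 8) := Real.exp_le_exp.2 hlog

lemma hoeffding_finset {ι : Type*} {I : Finset ι} (hI : I.Nonempty) (y : ι → ℝ)
    (hlip : ∀ i ∈ I, ∀ j ∈ I, y i ≤ y j + 1) (x : ℝ) :
    ∑ i ∈ I, Real.exp (x * y i)
      ≤ (I.card : ℝ) * Real.exp (x * ((∑ i ∈ I, y i) / (I.card : ℝ)) + x ^ 2 / 8) := by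
  classical
  set N : ℝ := (I.card : ℝ) with hN_def
  have hN : 0 < N := by
    rw [hN_def]
    exact_mod_cast Finset.card_pos.2 hI
  set c : ℝ := I.inf' hI y with hc_def
  set T : ℝ := ∑ i ∈ I, y i with hT_def
  set μ : ℝ := T / N with hμ_def
  have hc_le : ∀ i ∈ I, c ≤ y i := fun i hi => Finset.inf'_le y hi
  have hle_c1 : ∀ i ∈ I, y i ≤ c + 1 := by
    intro i hi
    obtain ⟨j, hj, hjc⟩ := Finset.exists_mem_eq_inf' hI y
    rw [hc_def, hjc]
    exact hlip i hi j hj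
  have hTlb : N * c ≤ T := by
    rw [hT_def]
    calc N * c = ∑ _i ∈ I, c := by rw [Finset.sum_const, nsmul_eq_mul, hN_def]
    _ ≤ ∑ i ∈ I, y i := Finset.sum_le_sum hc_le
  have hTub : T ≤ N * (c + 1) := by
    rw [hT_def]
    calc ∑ i ∈ I, y i ≤ ∑ _i ∈ I, (c + 1) := Finset.sum_le_sum hle_c1
    _ = N * (c + 1) := by rw [Finset.sum_const, nsmul_eq_mul, hN_def]
  set s : ℝ := μ - c with hs_def
  have hs0 : 0 ≤ s := by
    have hcμ : c ≤ μ := by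
      rw [hμ_def, le_div_iff₀ hN]
      linarith
    simp only [hs_def]
    linarith
  have hs1 : s ≤ 1 := by
    have hμc : μ ≤ c + 1 := by
      rw [hμ_def, div_le_iff₀ hN]
      linarith
    simp only [hs_def]
    linarith
  have key : ∀ i ∈ I, Real.exp (x * y i)
      ≤ (c + 1 - y i) * Real.exp (x * c) + (y i - c) * Real.exp (x * (c + 1)) := by
    intro i hi
    have h := convexOn_exp.2 (Set.mem_univ (x * c)) (Set.mem_univ (x * (c + 1)))
      (show (0:ℝ) ≤ c + 1 - y i by linarith [hle_c1 i hi])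
      (show (0:ℝ) ≤ y i - c by linarith [hc_le i hi]) (by ring)
    have harg : (c + 1 - y i) • (x * c) + (y i - c) • (x * (c + 1)) = x * y i := by
      simp only [smul_eq_mul]
      ring
    rw [harg] at h
    simpa [smul_eq_mul] using h
  have hsum : ∑ i ∈ I, Real.exp (x * y i)
      ≤ (N * (c + 1) - T) * Real.exp (x * c) + (T - N * c) * Real.exp (x * (c + 1)) := by
    calc ∑ i ∈ I, Real.exp (x * y i)
        ≤ ∑ i ∈ I, ((c + 1 - y i) * Real.exp (x * c) + (y i - c) * Real.exp (x * (c + 1))) :=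
          Finset.sum_le_sum key
    _ = (N * (c + 1) - T) * Real.exp (x * c) + (T - N * c) * Real.exp (x * (c + 1)) := by
        have e1 : ∑ i ∈ I, (c + 1 - y i) = N * (c + 1) - T := by
          rw [Finset.sum_sub_distrib, Finset.sum_const, nsmul_eq_mul]
        have e2 : ∑ i ∈ I, (y i - c) = T - N * c := by
          rw [Finset.sum_sub_distrib, Finset.sum_const, nsmul_eq_mul]
        rw [Finset.sum_add_distrib, ← Finset.sum_mul, ← Finset.sum_mul, e1, e2]
  have hTμ : T = N * μ := by
    rw [hμ_def, mul_div_cancel₀ _ (ne_of_gt hN)]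
  have hcore := hoeffding_core hs0 hs1 x
  calc ∑ i ∈ I, Real.exp (x * y i)
      ≤ (N * (c + 1) - T) * Real.exp (x * c) + (T - N * c) * Real.exp (x * (c + 1)) := hsum
  _ = N * Real.exp (x * c) * (1 - s + s * Real.exp x) := by
      rw [hTμ, hs_def]
      have hexp : Real.exp (x * (c + 1)) = Real.exp (x * c) * Real.exp x := by
        rw [← Real.exp_add]
        ring_nf
      rw [hexp]
      ring
  _ ≤ N * Real.exp (x * c) * Real.exp (s * x + x ^ 2 / 8) := by
      apply mul_le_mul_of_nonneg_left hcore
      exact mul_nonneg (le_of_lt hN) (Real.exp_pos _).le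
  _ = N * Real.exp (x * μ + x ^ 2 / 8) := by
      rw [mul_assoc, ← Real.exp_add]
      congr 2
      rw [hs_def]
      ring

end Hoeffding

lemma pair_subset {S : Finset ℕ} {v w : ℕ} (hv : v ∈ S) (hw : w ∈ S) :
    ({v, w} : Finset ℕ) ⊆ S := by
  intro x hx
  rcases Finset.mem_insert.1 hx with h | h
  · exact h ▸ hv
  · rw [Finset.mem_singleton] at h; exact h ▸ hw

lemma swapPM_fiber' {m : Finset (Finset ℕ)} {v w w' : ℕ} (hvw : v ≠ w) (hvw' : v ≠ w')
    (hmem : {v, w'} ∈ m) : {v, w} ∈ swapPM w w' m := by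
  rw [mem_swapPM, image_swap_pair hvw hvw']
  exact hmem

lemma card_fiber {S : Finset ℕ} {v w : ℕ} (hv : v ∈ S) (hw : w ∈ S) (hvw : v ≠ w)
    {k : ℕ} (hS : S.card = 2 * (k + 1)) :
    ((PMs S).filter (fun m => {v, w} ∈ m)).card = oddFactorial k := by
  have h1 : (((PMs S).filter (fun m => {v, w} ∈ m)).card : ℕ)
      = ∑ _m ∈ (PMs S).filter (fun m => {v, w} ∈ m), (1 : ℕ) := by
    rw [Finset.sum_const, smul_eq_mul, mul_one]
  rw [h1, sum_fiber_eq hv hw hvw (fun _ => (1 : ℕ)), Finset.sum_const, smul_eq_mul, mul_one]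
  apply card_PMs
  rw [Finset.card_sdiff_of_subset (pair_subset hv hw), pair_ne hvw, hS]
  omega

lemma sum_fiber_lip {S : Finset ℕ} {v w w' : ℕ} (hv : v ∈ S) (hw : w ∈ S) (hw' : w' ∈ S)
    (hvw : v ≠ w) (hvw' : v ≠ w') (hww' : w ≠ w')
    {f : Finset (Finset ℕ) → ℝ} (hlip : ∀ m m', (Gr S).Adj m m' → f m' ≤ f m + 1) :
    ∑ m ∈ (PMs S).filter (fun m => {v, w} ∈ m), f m
      ≤ (∑ m ∈ (PMs S).filter (fun m => {v, w'} ∈ m), f m)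
        + (((PMs S).filter (fun m => {v, w} ∈ m)).card : ℝ) := by
  have hswap : ∑ m ∈ (PMs S).filter (fun m => {v, w'} ∈ m), f m
      = ∑ m ∈ (PMs S).filter (fun m => {v, w} ∈ m), f (swapPM w w' m) := by
    refine Finset.sum_nbij' (swapPM w w') (swapPM w w') ?_ ?_ ?_ ?_ ?_
    · intro m hm
      rw [Finset.mem_filter] at hm ⊢
      exact ⟨mem_PMs.2 (swapPM_pm (mem_PMs.1 hm.1) hw hw'), swapPM_fiber' hvw hvw' hm.2⟩
    · intro m hm
      rw [Finset.mem_filter] at hm ⊢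
      exact ⟨mem_PMs.2 (swapPM_pm (mem_PMs.1 hm.1) hw hw'), swapPM_fiber hvw hvw' hm.2⟩
    · intro m _; exact swapPM_invol _ _ _
    · intro m _; exact swapPM_invol _ _ _
    · intro m _; rw [swapPM_invol]
  have hpt : ∀ m ∈ (PMs S).filter (fun m => {v, w} ∈ m), f m ≤ f (swapPM w w' m) + 1 := by
    intro m hm
    rw [Finset.mem_filter] at hm
    have hadj := swapPM_adj (mem_PMs.1 hm.1) hv hw hw' hvw hvw' hww' hm.2
    exact hlip _ _ hadj.symm
  calc ∑ m ∈ (PMs S).filter (fun m => {v, w} ∈ m), f m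
      ≤ ∑ m ∈ (PMs S).filter (fun m => {v, w} ∈ m), (f (swapPM w w' m) + 1) :=
        Finset.sum_le_sum hpt
  _ = (∑ m ∈ (PMs S).filter (fun m => {v, w} ∈ m), f (swapPM w w' m))
        + (((PMs S).filter (fun m => {v, w} ∈ m)).card : ℝ) := by
      rw [Finset.sum_add_distrib, Finset.sum_const, nsmul_eq_mul, mul_one]
  _ = _ := by rw [← hswap]

theorem mgf_bound : ∀ k : ℕ, ∀ S : Finset ℕ, S.card = 2 * k →
    ∀ f : Finset (Finset ℕ) → ℝ,
    (∀ m m', (Gr S).Adj m m' → f m' ≤ f m + 1) → ∀ x : ℝ,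
    ∑ m ∈ PMs S, Real.exp (x * f m)
      ≤ (oddFactorial k : ℝ) *
        Real.exp (x * ((∑ m ∈ PMs S, f m) / (oddFactorial k : ℝ)) + (k : ℝ) * x ^ 2 / 8) := by
  intro k
  induction k with
  | zero =>
    intro S hS f _ x
    have hSe : S = ∅ := Finset.card_eq_zero.1 hS
    subst hSe
    rw [PMs_empty]
    have h1 : (oddFactorial 0 : ℝ) = 1 := by norm_num [oddFactorial]
    rw [Finset.sum_singleton, Finset.sum_singleton, h1]
    simp
  | succ k ih =>
    intro S hS f hlip x
    obtain ⟨v, hv⟩ : S.Nonempty := Finset.card_pos.1 (by omega)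
    have hWcard : (S.erase v).card = 2 * k + 1 := by
      rw [Finset.card_erase_of_mem hv]; omega
    have hWne : (S.erase v).Nonempty := Finset.card_pos.1 (by omega)
    have hmemW : ∀ w ∈ S.erase v, w ∈ S ∧ v ≠ w := fun w hw =>
      ⟨(Finset.mem_erase.1 hw).2, fun h => (Finset.mem_erase.1 hw).1 h.symm⟩
    have hSw : ∀ w ∈ S.erase v, (S \ {v, w}).card = 2 * k := by
      intro w hw
      obtain ⟨hwS, hvw⟩ := hmemW w hw
      rw [Finset.card_sdiff_of_subset (pair_subset hv hwS), pair_ne hvw, hS]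
      omega
    have hOF : (0 : ℝ) < (oddFactorial k : ℝ) := by exact_mod_cast oddFactorial_pos k
    have hOF' : ((oddFactorial k : ℝ)) ≠ 0 := ne_of_gt hOF
    -- per-fiber bound from the induction hypothesis
    have hfib : ∀ w ∈ S.erase v, ∑ m ∈ (PMs S).filter (fun m => {v, w} ∈ m), Real.exp (x * f m)
        ≤ (oddFactorial k : ℝ) * Real.exp (x *
            ((∑ m ∈ (PMs S).filter (fun m => {v, w} ∈ m), f m) / (oddFactorial k : ℝ))
          + (k : ℝ) * x ^ 2 / 8) := by
      intro w hw
      obtain ⟨hwS, hvw⟩ := hmemW w hw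
      have hTg : (∑ m ∈ (PMs S).filter (fun m => {v, w} ∈ m), f m)
          = ∑ m₀ ∈ PMs (S \ {v, w}), f (insert {v, w} m₀) := sum_fiber_eq hv hwS hvw f
      have hlip' : ∀ m₀ m₀', (Gr (S \ {v, w})).Adj m₀ m₀' →
          f (insert {v, w} m₀') ≤ f (insert {v, w} m₀) + 1 :=
        fun m₀ m₀' h => hlip _ _ (adj_insert hv hwS hvw h)
      calc ∑ m ∈ (PMs S).filter (fun m => {v, w} ∈ m), Real.exp (x * f m)
          = ∑ m₀ ∈ PMs (S \ {v, w}), Real.exp (x * f (insert {v, w} m₀)) :=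
            sum_fiber_eq hv hwS hvw _
      _ ≤ (oddFactorial k : ℝ) * Real.exp (x *
            ((∑ m₀ ∈ PMs (S \ {v, w}), f (insert {v, w} m₀)) / (oddFactorial k : ℝ))
          + (k : ℝ) * x ^ 2 / 8) := ih _ (hSw w hw) _ hlip' x
      _ = _ := by rw [← hTg]
    -- Lipschitz property of fiber means
    have hμlip : ∀ w ∈ S.erase v, ∀ w' ∈ S.erase v,
        (∑ m ∈ (PMs S).filter (fun m => {v, w} ∈ m), f m) / (oddFactorial k : ℝ)
          ≤ (∑ m ∈ (PMs S).filter (fun m => {v, w'} ∈ m), f m) / (oddFactorial k : ℝ) + 1 := by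
      intro w hw w' hw'
      obtain ⟨hwS, hvw⟩ := hmemW w hw
      obtain ⟨hw'S, hvw'⟩ := hmemW w' hw'
      rcases eq_or_ne w w' with rfl | hww'
      · linarith
      · have hcard : (((PMs S).filter (fun m => {v, w} ∈ m)).card : ℝ)
            = (oddFactorial k : ℝ) := by
          rw [card_fiber hv hwS hvw hS]
        have hls := sum_fiber_lip hv hwS hw'S hvw hvw' hww' hlip
        rw [hcard] at hls
        calc (∑ m ∈ (PMs S).filter (fun m => {v, w} ∈ m), f m) / (oddFactorial k : ℝ)
            ≤ ((∑ m ∈ (PMs S).filter (fun m => {v, w'} ∈ m), f m)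
                + (oddFactorial k : ℝ)) / (oddFactorial k : ℝ) := by gcongr
        _ = _ := by rw [add_div, div_self hOF']
    have hhoef := hoeffding_finset hWne
      (fun w => (∑ m ∈ (PMs S).filter (fun m => {v, w} ∈ m), f m) / (oddFactorial k : ℝ))
      hμlip x
    have hsplitf : ∑ m ∈ PMs S, f m
        = ∑ w ∈ S.erase v, ∑ m ∈ (PMs S).filter (fun m => {v, w} ∈ m), f m := sum_fibers hv f
    have hmeansum : ∑ w ∈ S.erase v,
        (∑ m ∈ (PMs S).filter (fun m => {v, w} ∈ m), f m) / (oddFactorial k : ℝ)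
          = (∑ m ∈ PMs S, f m) / (oddFactorial k : ℝ) := by
      rw [← Finset.sum_div, ← hsplitf]
    have hOFs : (oddFactorial (k + 1) : ℝ) = (2 * (k : ℝ) + 1) * (oddFactorial k : ℝ) := by
      rw [show oddFactorial (k + 1) = (2 * k + 1) * oddFactorial k from rfl]
      push_cast
      ring
    have hWc : ((S.erase v).card : ℝ) = 2 * (k : ℝ) + 1 := by
      rw [hWcard]; push_cast; ring
    calc ∑ m ∈ PMs S, Real.exp (x * f m)
        = ∑ w ∈ S.erase v, ∑ m ∈ (PMs S).filter (fun m => {v, w} ∈ m), Real.exp (x * f m) :=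
          sum_fibers hv _
    _ ≤ ∑ w ∈ S.erase v, (oddFactorial k : ℝ) * Real.exp (x *
            ((∑ m ∈ (PMs S).filter (fun m => {v, w} ∈ m), f m) / (oddFactorial k : ℝ))
          + (k : ℝ) * x ^ 2 / 8) := Finset.sum_le_sum hfib
    _ = (oddFactorial k : ℝ) * Real.exp ((k : ℝ) * x ^ 2 / 8) *
          ∑ w ∈ S.erase v, Real.exp (x *
            ((∑ m ∈ (PMs S).filter (fun m => {v, w} ∈ m), f m) / (oddFactorial k : ℝ))) := by
        rw [Finset.mul_sum]
        apply Finset.sum_congr rfl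
        intro w _
        rw [Real.exp_add]
        ring
    _ ≤ (oddFactorial k : ℝ) * Real.exp ((k : ℝ) * x ^ 2 / 8) *
          (((S.erase v).card : ℝ) * Real.exp (x *
            ((∑ w ∈ S.erase v, (∑ m ∈ (PMs S).filter (fun m => {v, w} ∈ m), f m)
              / (oddFactorial k : ℝ)) / ((S.erase v).card : ℝ)) + x ^ 2 / 8)) := by
        apply mul_le_mul_of_nonneg_left hhoef (by positivity)
    _ = (oddFactorial (k + 1) : ℝ) *
          Real.exp (x * ((∑ m ∈ PMs S, f m) / (oddFactorial (k + 1) : ℝ))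
            + ((k : ℝ) + 1) * x ^ 2 / 8) := by
        rw [hmeansum, hWc, hOFs]
        rw [show ∀ a b : ℝ, (oddFactorial k : ℝ) * Real.exp a * ((2 * (k : ℝ) + 1) * Real.exp b)
            = ((2 * (k : ℝ) + 1) * (oddFactorial k : ℝ)) * Real.exp (a + b) from
          fun a b => by rw [Real.exp_add]; ring]
        congr 1
        rw [div_div]
        ring
    _ = (oddFactorial (k + 1) : ℝ) *
          Real.exp (x * ((∑ m ∈ PMs S, f m) / (oddFactorial (k + 1) : ℝ))
            + ((k + 1 : ℕ) : ℝ) * x ^ 2 / 8) := by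
        push_cast
        ring_nf

end

end IsoPM

set_option maxHeartbeats 1000000 in
open IsoPM in
theorem isoperimetric_Upsilon (n : ℕ) (a : ℝ) (ha0 : 0 < a) (ha1 : a < 1)
    (X : Set (Finset (Finset ℕ))) (hX : ∀ m ∈ X, IsPM n m)
    (hXCard : a * (oddFactorial n : ℝ) ≤ (X.ncard : ℝ))
    (h : ℕ) (hh : Real.sqrt ((n : ℝ) / 2 * Real.log (1 / a)) < (h : ℝ)) :
    (1 - Real.exp (-2 * ((h : ℝ) - Real.sqrt ((n : ℝ) / 2 * Real.log (1 / a))) ^ 2 / (n : ℝ)))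
        * (oddFactorial n : ℝ)
      ≤ (({m | ∃ x ∈ X, (Upsilon n).Reachable x m ∧ (Upsilon n).dist x m ≤ h} :
          Set (Finset (Finset ℕ))).ncard : ℝ) := by
  classical
  rcases Nat.eq_zero_or_pos n with rfl | hn1
  · simp only [Nat.cast_zero, div_zero, Real.exp_zero]
    norm_num
  have hn : (0 : ℝ) < (n : ℝ) := by exact_mod_cast hn1
  set S : Finset ℕ := Finset.range (2 * n) with hS_def
  have hScard : S.card = 2 * n := Finset.card_range _
  set P : Finset (Finset (Finset ℕ)) := PMs S with hP_def
  have hPcard : P.card = oddFactorial n := card_PMs n S hScard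
  set N : ℝ := (oddFactorial n : ℝ) with hN_def
  have hN : (0 : ℝ) < N := by
    rw [hN_def]
    exact_mod_cast oddFactorial_pos n
  set A : Finset (Finset (Finset ℕ)) := P.filter (fun m => m ∈ X) with hA_def
  have hUps : Upsilon n = Gr S := Upsilon_eq n
  have hXsubP : ∀ m ∈ X, m ∈ P := by
    intro m hm
    rw [hP_def, mem_PMs]
    exact hX m hm
  have hXA : X = (↑A : Set (Finset (Finset ℕ))) := by
    ext m
    simp only [hA_def, Finset.coe_filter, Set.mem_setOf_eq]
    exact ⟨fun hm => ⟨hXsubP m hm, hm⟩, fun hm => hm.2⟩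
  have hAcard : a * N ≤ (A.card : ℝ) := by
    rw [hN_def]
    calc a * (oddFactorial n : ℝ) ≤ (X.ncard : ℝ) := hXCard
    _ = (A.card : ℝ) := by rw [hXA, Set.ncard_coe_finset]
  have hAne : A.Nonempty := by
    rw [← Finset.card_pos]
    by_contra hc
    push_neg at hc
    have hcc : A.card = 0 := by omega
    rw [hcc] at hAcard
    push_cast at hAcard
    nlinarith
  -- distance function to A
  set f : Finset (Finset ℕ) → ℕ := fun m => A.inf' hAne (fun x0 => (Gr S).dist x0 m)
    with hf_def
  set F : Finset (Finset ℕ) → ℝ := fun m => (f m : ℝ) with hF_def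
  have hApm : ∀ x0 ∈ A, isPM S x0 := by
    intro x0 hx0
    rw [hA_def, Finset.mem_filter] at hx0
    exact mem_PMs.1 hx0.1
  have hF0 : ∀ m ∈ A, f m = 0 := by
    intro m hm
    have h1 : f m ≤ (Gr S).dist m m := Finset.inf'_le (fun x0 => (Gr S).dist x0 m) hm
    rw [SimpleGraph.dist_self] at h1
    omega
  have hFlip : ∀ m m', (Gr S).Adj m m' → F m' ≤ F m + 1 := by
    intro m m' hadj
    obtain ⟨x0, hx0A, hx0⟩ := Finset.exists_mem_eq_inf' hAne (fun x0 => (Gr S).dist x0 m)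
    have hreach : (Gr S).Reachable x0 m :=
      pm_reachable S.card S le_rfl (hApm x0 hx0A) hadj.2.1
    have h1 : f m' ≤ (Gr S).dist x0 m' :=
      Finset.inf'_le (fun x0 => (Gr S).dist x0 m') hx0A
    have h2 : (Gr S).dist x0 m' ≤ (Gr S).dist x0 m + 1 := dist_succ hreach hadj
    have h3 : f m' ≤ f m + 1 := by
      rw [hf_def]
      simp only
      rw [← hx0] at h2
      exact le_trans h1 h2
    rw [hF_def]
    push_cast
    exact_mod_cast h3
  have hFnonneg : ∀ m, 0 ≤ F m := fun m => Nat.cast_nonneg _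
  set μ : ℝ := (∑ m ∈ P, F m) / N with hμ_def
  have hμ0 : 0 ≤ μ := by
    rw [hμ_def]
    apply div_nonneg _ (le_of_lt hN)
    exact Finset.sum_nonneg fun m _ => hFnonneg m
  have hmgf : ∀ x : ℝ, ∑ m ∈ P, Real.exp (x * F m) ≤ N * Real.exp (x * μ + n * x ^ 2 / 8) := by
    intro x
    have := mgf_bound n S hScard F hFlip x
    rw [← hP_def, ← hN_def, ← hμ_def] at this
    exact this
  set h0 : ℝ := Real.sqrt ((n : ℝ) / 2 * Real.log (1 / a)) with hh0_def
  have hh0nn : 0 ≤ h0 := Real.sqrt_nonneg _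
  have hloga : 0 ≤ Real.log (1 / a) := Real.log_nonneg (by rw [le_div_iff₀ ha0]; linarith)
  -- Step A : μ ≤ h0
  have hμh0 : μ ≤ h0 := by
    set x : ℝ := -(4 * μ) / n with hx_def
    have hlow : a * N ≤ ∑ m ∈ P, Real.exp (x * F m) := by
      have h1 : a * N ≤ (A.card : ℝ) := hAcard
      have h2 : (A.card : ℝ) = ∑ m ∈ A, Real.exp (x * F m) := by
        rw [Finset.sum_congr rfl (fun m hm => by
          rw [hF_def]
          simp only
          rw [hF0 m hm]
          norm_num : ∀ m ∈ A, Real.exp (x * F m) = 1)]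
        rw [Finset.sum_const, nsmul_eq_mul, mul_one]
      have h3 : ∑ m ∈ A, Real.exp (x * F m) ≤ ∑ m ∈ P, Real.exp (x * F m) := by
        apply Finset.sum_le_sum_of_subset_of_nonneg (by rw [hA_def]; exact Finset.filter_subset _ _)
        intro m _ _
        positivity
      linarith
    have hexp : a ≤ Real.exp (x * μ + n * x ^ 2 / 8) := by
      have := le_trans hlow (hmgf x)
      calc a = (a * N) / N := by field_simp
      _ ≤ (N * Real.exp (x * μ + n * x ^ 2 / 8)) / N := by gcongr
      _ = Real.exp (x * μ + n * x ^ 2 / 8) := by field_simp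
    have hlog : Real.log a ≤ x * μ + n * x ^ 2 / 8 := by
      have := Real.log_le_log ha0 hexp
      rwa [Real.log_exp] at this
    have hcalc : x * μ + n * x ^ 2 / 8 = -(2 * μ ^ 2 / n) := by
      rw [hx_def]
      field_simp
      ring
    rw [hcalc] at hlog
    have hsq : μ ^ 2 ≤ (n : ℝ) / 2 * Real.log (1 / a) := by
      have hlog1a : Real.log (1 / a) = -Real.log a := by
        rw [one_div, Real.log_inv]
      rw [hlog1a]
      have h2 : 2 * μ ^ 2 / n ≤ -Real.log a := by linarith
      calc μ ^ 2 = (2 * μ ^ 2 / n) * (n / 2) := by field_simp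
      _ ≤ (-Real.log a) * (n / 2) := by
          apply mul_le_mul_of_nonneg_right h2
          positivity
      _ = (n : ℝ) / 2 * (-Real.log a) := by ring
    calc μ = Real.sqrt (μ ^ 2) := (Real.sqrt_sq hμ0).symm
    _ ≤ h0 := by
        rw [hh0_def]
        exact Real.sqrt_le_sqrt hsq
  -- Step B : tail bound
  set B : Finset (Finset (Finset ℕ)) := P.filter (fun m => h < f m) with hB_def
  set ε : ℝ := Real.exp (-2 * ((h : ℝ) - h0) ^ 2 / n) with hε_def
  have hBbound : (B.card : ℝ) ≤ N * ε := by
    set x : ℝ := 4 * ((h : ℝ) - μ) / n with hx_def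
    have hhμ : μ < (h : ℝ) := lt_of_le_of_lt hμh0 hh
    have hxpos : 0 < x := by
      rw [hx_def]
      apply div_pos _ hn
      linarith
    have hlow : (B.card : ℝ) * Real.exp (x * (h : ℝ)) ≤ ∑ m ∈ B, Real.exp (x * F m) := by
      calc (B.card : ℝ) * Real.exp (x * (h : ℝ))
          = ∑ _m ∈ B, Real.exp (x * (h : ℝ)) := by
            rw [Finset.sum_const, nsmul_eq_mul]
      _ ≤ ∑ m ∈ B, Real.exp (x * F m) := by
            apply Finset.sum_le_sum
            intro m hm
            rw [hB_def, Finset.mem_filter] at hm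
            have : (h : ℝ) ≤ F m := by
              show (h : ℝ) ≤ ((f m : ℕ) : ℝ)
              exact_mod_cast le_of_lt hm.2
            exact Real.exp_le_exp.2 (mul_le_mul_of_nonneg_left this (le_of_lt hxpos))
    have hup : ∑ m ∈ B, Real.exp (x * F m) ≤ N * Real.exp (x * μ + n * x ^ 2 / 8) := by
      refine le_trans ?_ (hmgf x)
      apply Finset.sum_le_sum_of_subset_of_nonneg (by rw [hB_def]; exact Finset.filter_subset _ _)
      intro m _ _
      positivity
    have hdiv : (B.card : ℝ) ≤ N * Real.exp (x * μ + n * x ^ 2 / 8 - x * (h : ℝ)) := by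
      have hE : (0 : ℝ) < Real.exp (x * (h : ℝ)) := Real.exp_pos _
      rw [Real.exp_sub, ← mul_div_assoc, le_div_iff₀ hE]
      linarith
    have hcalc : x * μ + n * x ^ 2 / 8 - x * (h : ℝ) = -2 * ((h : ℝ) - μ) ^ 2 / n := by
      rw [hx_def]
      field_simp
      ring
    rw [hcalc] at hdiv
    have hsq : ((h : ℝ) - h0) ^ 2 ≤ ((h : ℝ) - μ) ^ 2 := by
      apply pow_le_pow_left₀ (by linarith) (by linarith)
    have hmono : -2 * ((h : ℝ) - μ) ^ 2 / n ≤ -2 * ((h : ℝ) - h0) ^ 2 / n := by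
      rw [div_le_div_iff₀ hn hn]
      nlinarith
    calc (B.card : ℝ) ≤ N * Real.exp (-2 * ((h : ℝ) - μ) ^ 2 / n) := hdiv
    _ ≤ N * ε := by
        rw [hε_def]
        exact mul_le_mul_of_nonneg_left (Real.exp_le_exp.2 hmono) (le_of_lt hN)
  -- coverage
  set T : Set (Finset (Finset ℕ)) :=
    {m | ∃ x ∈ X, (Upsilon n).Reachable x m ∧ (Upsilon n).dist x m ≤ h} with hT_def
  have hsub : (↑(P \ B) : Set (Finset (Finset ℕ))) ⊆ T := by
    intro m hm
    rw [Finset.coe_sdiff, Set.mem_diff] at hm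
    obtain ⟨hmP, hmB⟩ := hm
    have hmP' : m ∈ P := hmP
    have hfm : f m ≤ h := by
      by_contra hc
      push_neg at hc
      exact hmB (by rw [hB_def]; exact Finset.mem_coe.2 (Finset.mem_filter.2 ⟨hmP', hc⟩))
    obtain ⟨x0, hx0A, hx0⟩ := Finset.exists_mem_eq_inf' hAne (fun x0 => (Gr S).dist x0 m)
    have hx0X : x0 ∈ X := by
      rw [hA_def, Finset.mem_filter] at hx0A
      exact hx0A.2
    have hreach : (Gr S).Reachable x0 m :=
      pm_reachable S.card S le_rfl (hApm x0 hx0A) (mem_PMs.1 hmP')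
    rw [hT_def]
    refine ⟨x0, hx0X, ?_, ?_⟩
    · rw [hUps]; exact hreach
    · rw [hUps]
      have : (Gr S).dist x0 m = f m := hx0.symm
      omega
  have hTsub : T ⊆ (↑P : Set (Finset (Finset ℕ))) := by
    rintro m ⟨x0, hx0X, hreach, -⟩
    rw [hUps] at hreach
    have : isPM S m := pm_of_reachable hreach (hX x0 hx0X)
    exact Finset.mem_coe.2 (mem_PMs.2 this)
  have hTfin : T.Finite := Set.Finite.subset (P.finite_toSet) hTsub
  have hcount : ((P \ B).card : ℝ) ≤ (T.ncard : ℝ) := by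
    have h1 : (P \ B).card = (↑(P \ B) : Set (Finset (Finset ℕ))).ncard :=
      (Set.ncard_coe_finset _).symm
    have h2 : (↑(P \ B) : Set (Finset (Finset ℕ))).ncard ≤ T.ncard :=
      Set.ncard_le_ncard hsub hTfin
    exact_mod_cast h1 ▸ h2
  have hBsubP : B ⊆ P := by rw [hB_def]; exact Finset.filter_subset _ _
  have hcard_sdiff : (P \ B).card = P.card - B.card := Finset.card_sdiff_of_subset hBsubP
  have hBle : B.card ≤ P.card := Finset.card_le_card hBsubP
  have hPBcast : ((P \ B).card : ℝ) = N - (B.card : ℝ) := by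
    rw [hcard_sdiff, hN_def, ← hPcard]
    push_cast [hBle]
    ring
  calc (1 - ε) * N = N - N * ε := by ring
  _ ≤ N - (B.card : ℝ) := by linarith
  _ = ((P \ B).card : ℝ) := hPBcast.symm
  _ ≤ (T.ncard : ℝ) := hcount
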